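/- For every normed space X of dimension at least 2, the tangential modulus of convexity φ_X satisfies: (a) φ_X is 1-Lipschitz and φ_X(0) = 0; (b) φ_X(λt) ≤ λ·φ_X(t) for all λ ∈ (0,1) and t ∈ [0,∞) (in particular φ_X is non-decreasing); (c) δ_X(t/(1 + φ_X(t))) ≤ φ_X(t)/(1 + φ_X(t)) for all t ∈ [0,2); (d) if t ∈ [0,2) and t/2 − 2δ_X(t) ≥ 0, then φ_X(t/2 − 2δ_X(t)) ≤ δ_X(t); (e) φ_X is positive on (0,∞) if and only if δ_X is positive on (0,2). -/

import Mathlib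

open Set Metric ENNReal

universe u

/-- A set `P` in a normed space is `r`-separated if `‖x - y‖ ≥ r`
for all distinct `x, y ∈ P`. -/
def IsRSeparated {X : Type u} [NormedAddCommGroup X] (r : ℝ) (P : Set X) : Prop :=
  ∀ x ∈ P, ∀ y ∈ P, x ≠ y → r ≤ ‖x - y‖

/-- A set `P` in a normed space is `r`-dense if every point of the space is within
distance `r` of some point of `P`. -/
def IsRDense {X : Type u} [NormedAddCommGroup X] (r : ℝ) (P : Set X) : Prop :=
  ∀ x : X, ∃ p ∈ P, ‖x - p‖ ≤ r

/-- The simultaneous packing and covering constant `γ(X)`: the infimum of all `r > 0`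
for which `X` contains a set that is simultaneously `2`-separated and `r`-dense. -/
noncomputable def packingCovering (X : Type u) [NormedAddCommGroup X] : ℝ :=
  sInf {r : ℝ | 0 < r ∧ ∃ P : Set X, IsRSeparated 2 P ∧ IsRDense r P}

/-- The lattice simultaneous packing and covering constant `γ*(X)`: the infimum of all
`r > 0` for which `X` contains an additive subgroup that is simultaneously `2`-separated
and `r`-dense. -/
noncomputable def packingCoveringStar (X : Type u) [NormedAddCommGroup X] : ℝ :=
  sInf {r : ℝ | 0 < r ∧ ∃ D : AddSubgroup X,
    IsRSeparated 2 (D : Set X) ∧ IsRDense r (D : Set X)}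

/-- The Kottman constant `K(X)`: the supremum of all `r > 0` such that the closed unit
ball of `X` contains an infinite `r`-separated set. -/
noncomputable def kottman (X : Type u) [NormedAddCommGroup X] : ℝ :=
  sSup {r : ℝ | 0 < r ∧ ∃ P : Set X,
    P ⊆ closedBall (0 : X) 1 ∧ P.Infinite ∧ IsRSeparated r P}

/-- The `κ`-Kottman constant `K(X; κ)`: the supremum of all `r > 0` such that the closed
unit ball of `X` contains an `r`-separated set of cardinality `κ`. -/
noncomputable def kottmanCard (X : Type u) [NormedAddCommGroup X] (κ : Cardinal.{u}) : ℝ :=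
  sSup {r : ℝ | 0 < r ∧ ∃ P : Set X,
    P ⊆ closedBall (0 : X) 1 ∧ Cardinal.mk ↥P = κ ∧ IsRSeparated r P}

/-- The density character of a topological space: the smallest cardinality of a dense
subset. -/
noncomputable def densChar (X : Type u) [TopologicalSpace X] : Cardinal.{u} :=
  sInf {c : Cardinal.{u} | ∃ s : Set X, Dense s ∧ Cardinal.mk ↥s = c}

/-- The modulus of local uniform rotundity `δ_X(x₀, ε)` at a point `x₀`. -/
noncomputable def lurModulus {X : Type u} [NormedAddCommGroup X] (x₀ : X) (ε : ℝ) : ℝ :=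
  sInf {d : ℝ | ∃ y : X, ‖y‖ ≤ 1 ∧ ε ≤ ‖x₀ - y‖ ∧ d = 1 - ‖x₀ + y‖ / 2}

/-- `x₀` is a LUR (locally uniformly rotund) point of the unit ball of `X` if it lies on
the unit sphere and `δ_X(x₀, ε) > 0` for every `ε ∈ (0, 2]`. -/
def IsLURPoint {X : Type u} [NormedAddCommGroup X] (x₀ : X) : Prop :=
  ‖x₀‖ = 1 ∧ ∀ ε : ℝ, 0 < ε → ε ≤ 2 → 0 < lurModulus x₀ ε

/-- The modulus of convexity `δ_X(ε)` of a normed space `X`. -/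
noncomputable def convexityModulus (X : Type u) [NormedAddCommGroup X] (ε : ℝ) : ℝ :=
  sInf {d : ℝ | ∃ x y : X, ‖x‖ ≤ 1 ∧ ‖y‖ ≤ 1 ∧ ε ≤ ‖x - y‖ ∧ d = 1 - ‖x + y‖ / 2}

/-- The tangential modulus of convexity `φ_X(t)`, defined through Birkhoff-James
orthogonality: `φ_X(t) = inf {‖x + t v‖ - 1 : x, v ∈ S_X, x ⊥_BJ v}`. -/
noncomputable def tangentialModulus (X : Type u) [NormedAddCommGroup X]
    [NormedSpace ℝ X] (t : ℝ) : ℝ :=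
  sInf {d : ℝ | ∃ x v : X, ‖x‖ = 1 ∧ ‖v‖ = 1 ∧
    (∀ lam : ℝ, ‖x‖ ≤ ‖x + lam • v‖) ∧ d = ‖x + t • v‖ - 1}

/-- `φ : [0,∞) → [0,∞)` is a positive modulus: `φ(0) = 0`, `φ` is continuous at `0`,
`t ↦ φ(t)/t` is non-decreasing on `(0,∞)`, and `φ(t) > 0` for `t > 0`. -/
def IsPositiveModulus (φ : ℝ → ℝ) : Prop :=
  φ 0 = 0 ∧ Filter.Tendsto φ (nhdsWithin 0 (Set.Ici 0)) (nhds 0) ∧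
    (∀ s t : ℝ, 0 < s → s ≤ t → φ s / s ≤ φ t / t) ∧ ∀ t : ℝ, 0 < t → 0 < φ t

/-- The positive modulus `φ_p(t) = (1 + t^p)^(1/p) - 1` (real exponents). -/
noncomputable def phiP (p : ℝ) (t : ℝ) : ℝ := (1 + t ^ p) ^ (1 / p) - 1

/-- A normed space `X` is `(<κ)-octahedral` if for every `ε > 0` and every closed
subspace `Z` of `X` of density character `< κ` there is a unit vector `x` with
`‖z + λ x‖ ≥ (1 - ε)(‖z‖ + |λ|)` for all `z ∈ Z`, `λ ∈ ℝ`. -/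
def KappaOctahedral (κ : Cardinal.{u}) (X : Type u) [NormedAddCommGroup X]
    [NormedSpace ℝ X] : Prop :=
  ∀ ε : ℝ, 0 < ε → ∀ Z : Submodule ℝ X, IsClosed (Z : Set X) → densChar ↥Z < κ →
    ∃ x : X, ‖x‖ = 1 ∧ ∀ z ∈ Z, ∀ lam : ℝ, (1 - ε) * (‖z‖ + |lam|) ≤ ‖z + lam • x‖

/-- A normed space `X` is `(<κ)-φ-octahedral` if for every `ε > 0` and every closed
subspace `Z` of `X` of density character `< κ` there is a unit vector `x` with
`‖z + λ x‖ ≥ (1 - ε)(1 + φ(|λ|))` for all `z` in the unit sphere of `Z` and `λ ∈ ℝ`. -/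
def PhiOctahedral (κ : Cardinal.{u}) (φ : ℝ → ℝ) (X : Type u) [NormedAddCommGroup X]
    [NormedSpace ℝ X] : Prop :=
  ∀ ε : ℝ, 0 < ε → ∀ Z : Submodule ℝ X, IsClosed (Z : Set X) → densChar ↥Z < κ →
    ∃ x : X, ‖x‖ = 1 ∧ ∀ z ∈ Z, ‖z‖ = 1 →
      ∀ lam : ℝ, (1 - ε) * (1 + φ |lam|) ≤ ‖z + lam • x‖

section TMaux

variable {X : Type u} [NormedAddCommGroup X] [NormedSpace ℝ X]

def Sphi (X : Type u) [NormedAddCommGroup X] [NormedSpace ℝ X] (t : ℝ) : Set ℝ :=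
  {d : ℝ | ∃ x v : X, ‖x‖ = 1 ∧ ‖v‖ = 1 ∧
    (∀ lam : ℝ, ‖x‖ ≤ ‖x + lam • v‖) ∧ d = ‖x + t • v‖ - 1}

lemma tm_eq (t : ℝ) : tangentialModulus X t = sInf (Sphi X t) := rfl

lemma exists_orth_pair (hdim : 2 ≤ Module.rank ℝ X) :
    ∃ x v : X, ‖x‖ = 1 ∧ ‖v‖ = 1 ∧ ∀ lam : ℝ, ‖x‖ ≤ ‖x + lam • v‖ := by
  have hnt : Nontrivial X := by
    rw [← rank_pos_iff_nontrivial (R := ℝ)]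
    exact lt_of_lt_of_le (by norm_num) hdim
  obtain ⟨x₀, hx₀⟩ := exists_ne (0 : X)
  set x : X := ‖x₀‖⁻¹ • x₀ with hxdef
  have hx : ‖x‖ = 1 := by
    rw [hxdef, norm_smul, norm_inv, norm_norm,
      inv_mul_cancel₀ (norm_ne_zero_iff.mpr hx₀)]
  obtain ⟨f, hf1, hfx⟩ := exists_dual_vector ℝ x (by
    intro h; rw [h] at hx; norm_num at hx)
  have hker : ∃ v₀ : X, v₀ ≠ 0 ∧ f v₀ = 0 := by
    by_contra h
    push_neg at h
    have hinj : Function.Injective f.toLinearMap := by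
      intro a b hab
      have hab' : f a = f b := hab
      by_contra hne
      exact h (a - b) (sub_ne_zero.mpr hne) (by rw [map_sub, hab', sub_self])
    have hle := LinearMap.lift_rank_le_of_injective f.toLinearMap hinj
    rw [Module.rank_self] at hle
    simp only [Cardinal.lift_one, Cardinal.lift_le_one_iff] at hle
    have : (2 : Cardinal.{u}) ≤ 1 := le_trans hdim hle
    norm_num at this
  obtain ⟨v₀, hv₀, hfv₀⟩ := hker
  refine ⟨x, ‖v₀‖⁻¹ • v₀, hx, ?_, ?_⟩
  · rw [norm_smul, norm_inv, norm_norm, inv_mul_cancel₀ (norm_ne_zero_iff.mpr hv₀)]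
  · intro lam
    have hfz : f (x + lam • (‖v₀‖⁻¹ • v₀)) = 1 := by
      simp [map_add, map_smul, hfv₀, smul_eq_mul, hfx, hx]
    calc ‖x‖ = 1 := hx
      _ = f (x + lam • (‖v₀‖⁻¹ • v₀)) := hfz.symm
      _ ≤ ‖f (x + lam • (‖v₀‖⁻¹ • v₀))‖ := le_abs_self _
      _ ≤ ‖f‖ * ‖x + lam • (‖v₀‖⁻¹ • v₀)‖ := f.le_opNorm _
      _ = ‖x + lam • (‖v₀‖⁻¹ • v₀)‖ := by rw [hf1, one_mul]

lemma Sphi_nonempty (hdim : 2 ≤ Module.rank ℝ X) (t : ℝ) : (Sphi X t).Nonempty := by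
  obtain ⟨x, v, hx, hv, horth⟩ := exists_orth_pair hdim
  exact ⟨‖x + t • v‖ - 1, x, v, hx, hv, horth, rfl⟩

lemma Sphi_nonneg {t : ℝ} {d : ℝ} (hd : d ∈ Sphi X t) : 0 ≤ d := by
  obtain ⟨x, v, hx, hv, horth, rfl⟩ := hd
  have := horth t
  rw [hx] at this
  linarith

lemma Sphi_bdd (t : ℝ) : BddBelow (Sphi X t) := ⟨0, fun _ hd => Sphi_nonneg hd⟩

lemma tm_nonneg (hdim : 2 ≤ Module.rank ℝ X) (t : ℝ) : 0 ≤ tangentialModulus X t :=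
  le_csInf (Sphi_nonempty hdim t) fun _ hd => Sphi_nonneg hd

lemma tm_le_mem {t d : ℝ} (hd : d ∈ Sphi X t) : tangentialModulus X t ≤ d :=
  csInf_le (Sphi_bdd t) hd

lemma tm_zero (hdim : 2 ≤ Module.rank ℝ X) : tangentialModulus X 0 = 0 := by
  obtain ⟨x, v, hx, hv, horth⟩ := exists_orth_pair hdim
  refine le_antisymm (tm_le_mem ⟨x, v, hx, hv, horth, ?_⟩) (tm_nonneg hdim 0)
  rw [zero_smul, add_zero, hx]; norm_num

lemma myreal_le_of_forall_pos {a b : ℝ} (h : ∀ ε : ℝ, 0 < ε → a ≤ b + ε) : a ≤ b := by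
  by_contra h'
  push_neg at h'
  have := h ((a - b)/2) (by linarith)
  linarith

end TMaux

section TMaux2
variable {X : Type u} [NormedAddCommGroup X] [NormedSpace ℝ X]

lemma tm_lip_half (hdim : 2 ≤ Module.rank ℝ X) (s t : ℝ) :
    tangentialModulus X s ≤ tangentialModulus X t + |s - t| := by
  have key : ∀ d ∈ Sphi X t, tangentialModulus X s - |s - t| ≤ d := by
    rintro d ⟨x, v, hx, hv, horth, rfl⟩
    have h1 : tangentialModulus X s ≤ ‖x + s • v‖ - 1 :=
      tm_le_mem ⟨x, v, hx, hv, horth, rfl⟩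
    have h2 : ‖x + s • v‖ ≤ ‖x + t • v‖ + |s - t| := by
      calc ‖x + s • v‖ = ‖(x + t • v) + (s - t) • v‖ := by
            congr 1; rw [sub_smul]; abel
        _ ≤ ‖x + t • v‖ + ‖(s - t) • v‖ := norm_add_le _ _
        _ = ‖x + t • v‖ + |s - t| := by rw [norm_smul, hv, mul_one, Real.norm_eq_abs]
    linarith
  have := le_csInf (Sphi_nonempty hdim t) key
  rw [← tm_eq] at this
  linarith

lemma tm_lipschitz (hdim : 2 ≤ Module.rank ℝ X) (s t : ℝ) :
    |tangentialModulus X s - tangentialModulus X t| ≤ |s - t| := by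
  rw [abs_sub_le_iff]
  constructor
  · linarith [tm_lip_half hdim s t]
  · rw [abs_sub_comm]
    linarith [tm_lip_half hdim t s]

lemma tm_scale (hdim : 2 ≤ Module.rank ℝ X) {lam t : ℝ} (h0 : 0 < lam) (h1 : lam ≤ 1) :
    tangentialModulus X (lam * t) ≤ lam * tangentialModulus X t := by
  have key : ∀ d ∈ Sphi X t, tangentialModulus X (lam * t) / lam ≤ d := by
    rintro d ⟨x, v, hx, hv, horth, rfl⟩
    have hid : x + (lam * t) • v = (1 - lam) • x + lam • (x + t • v) := by module
    have h2 : ‖x + (lam * t) • v‖ ≤ (1 - lam) + lam * ‖x + t • v‖ := by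
      rw [hid]
      calc ‖(1 - lam) • x + lam • (x + t • v)‖
          ≤ ‖(1 - lam) • x‖ + ‖lam • (x + t • v)‖ := norm_add_le _ _
        _ = (1 - lam) + lam * ‖x + t • v‖ := by
            rw [norm_smul, norm_smul, hx, Real.norm_eq_abs, Real.norm_eq_abs,
              abs_of_nonneg (by linarith), abs_of_nonneg (by linarith), mul_one]
    have h1' : tangentialModulus X (lam * t) ≤ ‖x + (lam * t) • v‖ - 1 :=
      tm_le_mem ⟨x, v, hx, hv, horth, rfl⟩
    rw [div_le_iff₀ h0]
    have : ‖x + (lam * t) • v‖ - 1 ≤ lam * (‖x + t • v‖ - 1) := by linarith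
    calc tangentialModulus X (lam * t) ≤ lam * (‖x + t • v‖ - 1) := le_trans h1' this
      _ = (‖x + t • v‖ - 1) * lam := mul_comm _ _
  have := le_csInf (Sphi_nonempty hdim t) key
  rw [← tm_eq] at this
  rw [div_le_iff₀ h0] at this
  linarith [this]
lemma tm_mono (hdim : 2 ≤ Module.rank ℝ X) {s t : ℝ} (hs : 0 ≤ s) (hst : s ≤ t) :
    tangentialModulus X s ≤ tangentialModulus X t := by
  rcases eq_or_lt_of_le hs with h0 | h0
  · rw [← h0, tm_zero hdim]
    exact tm_nonneg hdim t
  rcases eq_or_lt_of_le hst with h1 | h1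
  · rw [h1]
  have ht : 0 < t := lt_trans h0 h1
  have hlam0 : 0 < s / t := div_pos h0 ht
  have hlam1 : s / t ≤ 1 := by rw [div_le_one ht]; exact hst
  have := tm_scale (X := X) hdim hlam0 hlam1 (t := t)
  rw [div_mul_cancel₀ _ (ne_of_gt ht)] at this
  calc tangentialModulus X s ≤ s / t * tangentialModulus X t := this
    _ ≤ 1 * tangentialModulus X t :=
        mul_le_mul_of_nonneg_right hlam1 (tm_nonneg hdim t)
    _ = tangentialModulus X t := one_mul _

end TMaux2

section CMaux
variable {X : Type u} [NormedAddCommGroup X] [NormedSpace ℝ X]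

def Sdelta (X : Type u) [NormedAddCommGroup X] (ε : ℝ) : Set ℝ :=
  {d : ℝ | ∃ x y : X, ‖x‖ ≤ 1 ∧ ‖y‖ ≤ 1 ∧ ε ≤ ‖x - y‖ ∧ d = 1 - ‖x + y‖ / 2}

lemma cm_eq (ε : ℝ) : convexityModulus X ε = sInf (Sdelta X ε) := rfl

lemma Sdelta_nonneg {ε d : ℝ} (hd : d ∈ Sdelta X ε) : 0 ≤ d := by
  obtain ⟨x, y, hx, hy, hxy, rfl⟩ := hd
  have := norm_add_le x y
  linarith

lemma Sdelta_bdd (ε : ℝ) : BddBelow (Sdelta X ε) := ⟨0, fun _ hd => Sdelta_nonneg hd⟩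

lemma Sdelta_nonempty (hdim : 2 ≤ Module.rank ℝ X) {ε : ℝ} (hε : ε ≤ 2) :
    (Sdelta X ε).Nonempty := by
  obtain ⟨x, v, hx, hv, horth⟩ := exists_orth_pair hdim
  refine ⟨1, x, -x, le_of_eq hx, by rw [norm_neg]; exact le_of_eq hx, ?_, by simp⟩
  rw [sub_neg_eq_add, ← two_smul ℝ x, norm_smul, hx]
  simpa using hε

lemma cm_nonneg (hdim : 2 ≤ Module.rank ℝ X) {ε : ℝ} (hε : ε ≤ 2) :
    0 ≤ convexityModulus X ε :=
  le_csInf (Sdelta_nonempty hdim hε) fun _ hd => Sdelta_nonneg hd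

lemma cm_le_mem {ε d : ℝ} (hd : d ∈ Sdelta X ε) : convexityModulus X ε ≤ d :=
  csInf_le (Sdelta_bdd ε) hd

lemma goebel (hdim : 2 ≤ Module.rank ℝ X) {e1 e2 : ℝ} (h0 : 0 ≤ e1) (h12 : e1 ≤ e2)
    (h2 : e2 < 2) :
    convexityModulus X e2 ≤ convexityModulus X e1 + (e2 - e1) / (2 - e2) := by
  set s : ℝ := (e2 - e1) / (2 - e2) with hsdef
  have h2e2 : (0:ℝ) < 2 - e2 := by linarith
  have hs0 : 0 ≤ s := div_nonneg (by linarith) (le_of_lt h2e2)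
  have hs1 : (0:ℝ) < 1 + s := by linarith
  have hkey : e1 + 2 * s = e2 * (1 + s) := by
    have h' : s * (2 - e2) = e2 - e1 := by rw [hsdef, div_mul_cancel₀ _ (ne_of_gt h2e2)]
    linear_combination h'
  refine myreal_le_of_forall_pos (fun σ hσ => ?_)
  obtain ⟨d1, hd1mem, hd1lt⟩ := exists_lt_of_csInf_lt
    (Sdelta_nonempty hdim (by linarith : e1 ≤ 2))
    (lt_add_of_pos_right _ hσ)
  rw [← cm_eq] at hd1lt
  obtain ⟨a, b, ha, hb, hab, rfl⟩ := hd1mem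
  obtain ⟨u, hu, hkeyu⟩ : ∃ u : X, ‖u‖ = 1 ∧ ‖(a - b) + (2*s) • u‖ = ‖a - b‖ + 2*s := by
    rcases eq_or_ne a b with h | h
    · obtain ⟨e, v, he, _, _⟩ := exists_orth_pair hdim
      refine ⟨e, he, ?_⟩
      rw [h, sub_self, zero_add, norm_zero, zero_add, norm_smul, he, mul_one,
        Real.norm_eq_abs, abs_of_nonneg (by linarith)]
    · have hab0 : (0:ℝ) < ‖a - b‖ := norm_pos_iff.mpr (sub_ne_zero.mpr h)
      refine ⟨‖a - b‖⁻¹ • (a - b), ?_, ?_⟩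
      · rw [norm_smul, norm_inv, norm_norm, inv_mul_cancel₀ (ne_of_gt hab0)]
      · have hrw : (a - b) + (2*s) • (‖a - b‖⁻¹ • (a - b))
            = (1 + 2*s/‖a - b‖) • (a - b) := by
          module
        rw [hrw, norm_smul, Real.norm_eq_abs, abs_of_nonneg (by positivity), add_mul,
          one_mul, div_mul_cancel₀ _ (ne_of_gt hab0)]
  set x' : X := (1 + s)⁻¹ • (a + s • u) with hx'def
  set y' : X := (1 + s)⁻¹ • (b - s • u) with hy'def
  have hx'n : ‖x'‖ ≤ 1 := by
    rw [hx'def, norm_smul, Real.norm_eq_abs, abs_of_nonneg (by positivity),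
      inv_mul_le_iff₀ hs1, mul_one]
    calc ‖a + s • u‖ ≤ ‖a‖ + ‖s • u‖ := norm_add_le _ _
      _ ≤ 1 + s := by
          rw [norm_smul, hu, mul_one, Real.norm_eq_abs, abs_of_nonneg hs0]
          linarith
  have hy'n : ‖y'‖ ≤ 1 := by
    rw [hy'def, norm_smul, Real.norm_eq_abs, abs_of_nonneg (by positivity),
      inv_mul_le_iff₀ hs1, mul_one]
    calc ‖b - s • u‖ ≤ ‖b‖ + ‖s • u‖ := norm_sub_le _ _
      _ ≤ 1 + s := by
          rw [norm_smul, hu, mul_one, Real.norm_eq_abs, abs_of_nonneg hs0]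
          linarith
  have hdist : e2 ≤ ‖x' - y'‖ := by
    have hxy' : x' - y' = (1 + s)⁻¹ • ((a - b) + (2*s) • u) := by
      rw [hx'def, hy'def, ← smul_sub]
      congr 1
      module
    rw [hxy', norm_smul, Real.norm_eq_abs, abs_of_nonneg (by positivity), hkeyu]
    have h1 : e2 * (1+s) ≤ ‖a - b‖ + 2*s := by rw [← hkey]; linarith
    calc e2 = e2 * (1+s) * (1+s)⁻¹ := by field_simp
      _ ≤ (‖a - b‖ + 2*s) * (1+s)⁻¹ :=
          mul_le_mul_of_nonneg_right h1 (inv_nonneg.mpr (le_of_lt hs1))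
      _ = (1+s)⁻¹ * (‖a - b‖ + 2*s) := mul_comm _ _
  have hmem : (1 - ‖x' + y'‖ / 2) ∈ Sdelta X e2 := ⟨x', y', hx'n, hy'n, hdist, rfl⟩
  have hsum : ‖x' + y'‖ = (1+s)⁻¹ * ‖a + b‖ := by
    have : x' + y' = (1 + s)⁻¹ • (a + b) := by
      rw [hx'def, hy'def, ← smul_add]
      congr 1
      module
    rw [this, norm_smul, Real.norm_eq_abs, abs_of_nonneg (by positivity)]
  have hM2 : ‖a + b‖ ≤ 2 := by
    calc ‖a + b‖ ≤ ‖a‖ + ‖b‖ := norm_add_le _ _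
      _ ≤ 2 := by linarith
  have hfinal : 1 - ‖x' + y'‖ / 2 ≤ (1 - ‖a + b‖ / 2) + s := by
    rw [hsum]
    have hinv : (1+s)⁻¹ * (1+s) = 1 := inv_mul_cancel₀ (ne_of_gt hs1)
    have hinvpos : 0 ≤ (1+s)⁻¹ := inv_nonneg.mpr (le_of_lt hs1)
    nlinarith [norm_nonneg (a + b), mul_nonneg hinvpos hs0]
  calc convexityModulus X e2 ≤ 1 - ‖x' + y'‖ / 2 := cm_le_mem hmem
    _ ≤ (1 - ‖a + b‖ / 2) + s := hfinal
    _ ≤ convexityModulus X e1 + s + σ := by linarith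

end CMaux

section PartC
variable {X : Type u} [NormedAddCommGroup X] [NormedSpace ℝ X]

lemma part_c (hdim : 2 ≤ Module.rank ℝ X) {t : ℝ} (ht0 : 0 ≤ t) (ht2 : t < 2) :
    convexityModulus X (t / (1 + tangentialModulus X t)) ≤
      tangentialModulus X t / (1 + tangentialModulus X t) := by
  set φ := tangentialModulus X t with hφdef
  have hφ0 : 0 ≤ φ := tm_nonneg hdim t
  have h1φ : (0:ℝ) < 1 + φ := by linarith
  set e2 : ℝ := t / (1 + φ) with he2def
  have he2a : 0 ≤ e2 := div_nonneg ht0 (le_of_lt h1φ)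
  have he2b : e2 ≤ t := div_le_self ht0 (by linarith)
  have he2c : e2 < 2 := lt_of_le_of_lt he2b ht2
  have h2e2 : (0:ℝ) < 2 - e2 := by linarith
  refine myreal_le_of_forall_pos (fun η hη => ?_)
  set K : ℝ := 1 + 2 / (2 - e2) with hKdef
  have hK : (0:ℝ) < K := by positivity
  set ε : ℝ := η / K with hεdef
  have hε0 : 0 < ε := div_pos hη hK
  obtain ⟨d, hdmem, hdlt⟩ := exists_lt_of_csInf_lt (Sphi_nonempty hdim t)
    (lt_add_of_pos_right _ hε0)
  rw [← tm_eq, ← hφdef] at hdlt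
  have hφd : φ ≤ d := tm_le_mem hdmem
  have hd0 : 0 ≤ d := Sphi_nonneg hdmem
  have h1d : (0:ℝ) < 1 + d := by linarith
  obtain ⟨x, v, hx, hv, horth, hdef⟩ := hdmem
  have hnorm : ‖x + t • v‖ = 1 + d := by rw [hdef]; ring
  set e1 : ℝ := t / (1 + d) with he1def
  have he1a : 0 ≤ e1 := div_nonneg ht0 (le_of_lt h1d)
  have he12 : e1 ≤ e2 := by
    rw [he1def, he2def]
    exact div_le_div_of_nonneg_left ht0 h1φ (by linarith)
  -- the witnessing pair for δ(e1) ≤ d/(1+d)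
  have hδe1 : convexityModulus X e1 ≤ d / (1 + d) := by
    set a : X := (1 + d)⁻¹ • x with hadef
    set b : X := (1 + d)⁻¹ • (x + t • v) with hbdef
    have h1dinv : (0:ℝ) ≤ (1+d)⁻¹ := inv_nonneg.mpr (le_of_lt h1d)
    have han : ‖a‖ ≤ 1 := by
      rw [hadef, norm_smul, Real.norm_eq_abs, abs_of_nonneg h1dinv, hx, mul_one]
      rw [inv_le_one_iff₀]
      right; linarith
    have hbn : ‖b‖ ≤ 1 := by
      rw [hbdef, norm_smul, Real.norm_eq_abs, abs_of_nonneg h1dinv, hnorm,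
        inv_mul_cancel₀ (ne_of_gt h1d)]
    have hdist : e1 ≤ ‖a - b‖ := by
      have : a - b = -((1+d)⁻¹ • (t • v)) := by
        rw [hadef, hbdef, ← smul_sub]
        congr 1
        module
      rw [this, norm_neg, norm_smul, norm_smul, hv, mul_one, Real.norm_eq_abs,
        Real.norm_eq_abs, abs_of_nonneg h1dinv, abs_of_nonneg ht0, he1def,
        div_eq_inv_mul]
    have hmid : 1 - ‖a + b‖ / 2 ≤ d / (1 + d) := by
      have hab : a + b = (1+d)⁻¹ • ((2:ℝ) • (x + (t/2) • v)) := by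
        rw [hadef, hbdef, ← smul_add]
        congr 1
        module
      have h2 : (2:ℝ) ≤ ‖(2:ℝ) • (x + (t/2) • v)‖ := by
        rw [norm_smul, Real.norm_eq_abs, abs_of_nonneg (by norm_num : (0:ℝ) ≤ 2)]
        have := horth (t/2)
        rw [hx] at this
        linarith
      have : (1+d)⁻¹ * 2 ≤ ‖a + b‖ := by
        rw [hab, norm_smul, Real.norm_eq_abs, abs_of_nonneg h1dinv]
        exact mul_le_mul_of_nonneg_left h2 h1dinv
      have hfrac : d / (1+d) = 1 - (1+d)⁻¹ := by field_simp; ring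
      rw [hfrac]
      linarith
    calc convexityModulus X e1 ≤ 1 - ‖a + b‖ / 2 := cm_le_mem ⟨a, b, han, hbn, hdist, rfl⟩
      _ ≤ d / (1 + d) := hmid
  have hgoebel := goebel hdim he1a he12 he2c
  -- bound (e2 - e1)/(2 - e2) ≤ 2ε/(2-e2)
  have hgap : e2 - e1 ≤ 2 * ε := by
    rw [he2def, he1def, div_sub_div _ _ (ne_of_gt h1φ) (ne_of_gt h1d)]
    rw [div_le_iff₀ (by positivity)]
    have hnum : t * (1 + d) - (1 + φ) * t = t * (d - φ) := by ring
    rw [hnum]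
    have ha1 : t * (d - φ) ≤ 2 * ε := by
      nlinarith [mul_nonneg (sub_nonneg.mpr hφd) (by linarith : (0:ℝ) ≤ 2 - t)]
    have ha2 : 2 * ε ≤ 2 * ε * ((1 + φ) * (1 + d)) := by
      nlinarith [mul_nonneg (le_of_lt hε0) (mul_nonneg hφ0 hd0),
        mul_nonneg (le_of_lt hε0) hφ0, mul_nonneg (le_of_lt hε0) hd0]
    linarith
  have hgap2 : (e2 - e1) / (2 - e2) ≤ 2 * ε / (2 - e2) := by gcongr
  have hdd : d / (1 + d) ≤ φ / (1 + φ) + ε := by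
    have h1 : d / (1 + d) ≤ (φ + ε) / (1 + φ + ε) := by
      rw [div_le_div_iff₀ h1d (by linarith : (0:ℝ) < 1 + φ + ε)]
      nlinarith [hdlt, hd0, hφ0, hε0]
    have h2 : (φ + ε) / (1 + φ + ε) ≤ (φ + ε) / (1 + φ) :=
      div_le_div_of_nonneg_left (by linarith) (by linarith) (by linarith)
    have h3 : (φ + ε) / (1 + φ) = φ / (1 + φ) + ε / (1 + φ) := add_div φ ε (1+φ)
    have h4 : ε / (1 + φ) ≤ ε := div_le_self (le_of_lt hε0) (by linarith)
    linarith
  have hεK : ε * K = η := by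
    rw [hεdef, div_mul_cancel₀ _ (ne_of_gt hK)]
  have hKval : ε + 2 * ε / (2 - e2) = ε * K := by
    rw [hKdef]
    field_simp
  calc convexityModulus X e2 ≤ convexityModulus X e1 + (e2 - e1) / (2 - e2) := hgoebel
    _ ≤ d / (1 + d) + 2 * ε / (2 - e2) := by linarith
    _ ≤ φ / (1 + φ) + (ε + 2 * ε / (2 - e2)) := by linarith
    _ = φ / (1 + φ) + η := by rw [hKval, hεK]

end PartC

section PartD
variable {X : Type u} [NormedAddCommGroup X] [NormedSpace ℝ X]

set_option maxHeartbeats 1000000 in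
lemma part_d (hdim : 2 ≤ Module.rank ℝ X) {t : ℝ} (ht0 : 0 ≤ t) (ht2 : t < 2)
    (hs : 0 ≤ t / 2 - 2 * convexityModulus X t) :
    tangentialModulus X (t / 2 - 2 * convexityModulus X t) ≤ convexityModulus X t := by
  set δ : ℝ := convexityModulus X t with hδdef
  have hδ0 : 0 ≤ δ := cm_nonneg hdim (le_of_lt ht2)
  set s : ℝ := t / 2 - 2 * δ with hsdef
  rcases eq_or_lt_of_le ht0 with h0 | h0
  · -- t = 0 : then δ = 0 and s = 0
    have h1 : 0 ≤ t / 2 - 2 * δ := hsdef ▸ hs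
    rw [← h0] at h1
    have hδeq : δ = 0 := le_antisymm (by linarith) hδ0
    have hseq : s = 0 := by rw [hsdef, ← h0, hδeq]; ring
    rw [hseq, tm_zero hdim]
    exact hδ0
  -- t > 0
  have hδt : 4 * δ ≤ t := by
    have h1 : 0 ≤ t / 2 - 2 * δ := hsdef ▸ hs
    linarith
  have hs1 : s < 1 := by rw [hsdef]; linarith
  refine myreal_le_of_forall_pos (fun η hη => ?_)
  set ε : ℝ := min (t/8) (η/8) with hεdef
  have hε0 : 0 < ε := lt_min (by linarith) (by linarith)
  have hεt : ε ≤ t/8 := min_le_left _ _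
  have hεη : ε ≤ η/8 := min_le_right _ _
  obtain ⟨d0', hmem, hlt⟩ := exists_lt_of_csInf_lt
    (Sdelta_nonempty hdim (le_of_lt ht2)) (lt_add_of_pos_right _ hε0)
  rw [← cm_eq, ← hδdef] at hlt
  obtain ⟨a, b, ha, hb, hab, rfl⟩ := hmem
  set m : X := (2:ℝ)⁻¹ • (a + b) with hmdef
  have hmnorm : ‖m‖ = ‖a + b‖ / 2 := by
    rw [hmdef, norm_smul, Real.norm_eq_abs, abs_of_nonneg (by norm_num : (0:ℝ) ≤ 2⁻¹)]
    ring
  set d0 : ℝ := 1 - ‖m‖ with hd0def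
  have hd0lt : d0 < δ + ε := by rw [hd0def, hmnorm]; exact hlt
  have hmub : ‖m‖ ≤ 1 := by
    rw [hmnorm]
    have := norm_add_le a b
    linarith
  have hd0nn : 0 ≤ d0 := by rw [hd0def]; linarith
  have hmeq : ‖m‖ = 1 - d0 := by rw [hd0def]; ring
  have hmlb : (1:ℝ)/4 < ‖m‖ := by rw [hmeq]; linarith
  have hm_pos : 0 < ‖m‖ := by linarith
  have hmne : m ≠ 0 := by
    intro h
    rw [h, norm_zero] at hm_pos
    exact lt_irrefl 0 hm_pos
  obtain ⟨F, hF1, hFm'⟩ := exists_dual_vector ℝ m (norm_ne_zero_iff.mpr hmne)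
  have hFm : F m = ‖m‖ := by exact_mod_cast hFm'
  have hFle : ∀ z : X, F z ≤ ‖z‖ := by
    intro z
    calc F z ≤ |F z| := le_abs_self _
      _ = ‖F z‖ := (Real.norm_eq_abs _).symm
      _ ≤ ‖F‖ * ‖z‖ := F.le_opNorm _
      _ = ‖z‖ := by rw [hF1, one_mul]
  set u0 : X := (2:ℝ)⁻¹ • (a - b) with hu0def
  have hu0norm : t/2 ≤ ‖u0‖ := by
    rw [hu0def, norm_smul, Real.norm_eq_abs, abs_of_nonneg (by norm_num : (0:ℝ) ≤ 2⁻¹)]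
    calc t/2 ≤ ‖a - b‖ / 2 := by linarith
      _ = 2⁻¹ * ‖a - b‖ := by ring
  have hmu0a : m + u0 = a := by rw [hmdef, hu0def]; module
  have hmu0b : m - u0 = b := by rw [hmdef, hu0def]; module
  obtain ⟨u, hunorm, hmu, hFu⟩ :
      ∃ u : X, t/2 ≤ ‖u‖ ∧ ‖m + u‖ ≤ 1 ∧ 0 ≤ F u := by
    rcases le_or_gt 0 (F u0) with h | h
    · exact ⟨u0, hu0norm, by rw [hmu0a]; exact ha, h⟩
    · refine ⟨-u0, by rw [norm_neg]; exact hu0norm, ?_, ?_⟩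
      · rw [← sub_eq_add_neg, hmu0b]; exact hb
      · rw [map_neg]; linarith
  set f : ℝ := F u with hfdef
  have hf0 : 0 ≤ f := hFu
  have hfd0 : f ≤ d0 := by
    have h1 : F (m + u) ≤ 1 := le_trans (hFle _) hmu
    rw [map_add, hFm] at h1
    rw [hd0def]
    linarith
  have hft : f < δ + ε := lt_of_le_of_lt hfd0 hd0lt
  set x : X := ‖m‖⁻¹ • m with hxdef
  have hxnorm : ‖x‖ = 1 := by
    rw [hxdef, norm_smul, norm_inv, norm_norm, inv_mul_cancel₀ (ne_of_gt hm_pos)]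
  have hFx : F x = 1 := by
    rw [hxdef, map_smul, smul_eq_mul, hFm, inv_mul_cancel₀ (ne_of_gt hm_pos)]
  set w : X := u - f • x with hwdef
  have hFw : F w = 0 := by
    rw [hwdef, map_sub, map_smul, smul_eq_mul, hFx, mul_one, hfdef, sub_self]
  have hwlb : t/2 - f ≤ ‖w‖ := by
    have h1 := norm_sub_norm_le u (f • x)
    rw [norm_smul, hxnorm, mul_one, Real.norm_eq_abs, abs_of_nonneg hf0] at h1
    rw [hwdef]
    linarith
  have htf : 0 < t/2 - f := by linarith
  have hwpos : 0 < ‖w‖ := lt_of_lt_of_le htf hwlb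
  set v : X := ‖w‖⁻¹ • w with hvdef
  have hvnorm : ‖v‖ = 1 := by
    rw [hvdef, norm_smul, norm_inv, norm_norm, inv_mul_cancel₀ (ne_of_gt hwpos)]
  have hFv : F v = 0 := by rw [hvdef, map_smul, smul_eq_mul, hFw, mul_zero]
  have horth : ∀ lam : ℝ, ‖x‖ ≤ ‖x + lam • v‖ := by
    intro lam
    have hval : F (x + lam • v) = 1 := by
      rw [map_add, hFx, map_smul, smul_eq_mul, hFv, mul_zero, add_zero]
    calc ‖x‖ = 1 := hxnorm
      _ = F (x + lam • v) := hval.symm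
      _ ≤ ‖x + lam • v‖ := hFle _
  have hφle : tangentialModulus X s ≤ ‖x + s • v‖ - 1 :=
    tm_le_mem ⟨x, v, hxnorm, hvnorm, horth, rfl⟩
  set β : ℝ := ‖m‖ + f with hβdef
  have hβpos : 0 < β := by rw [hβdef]; linarith
  have hβub : β ≤ 1 + f := by rw [hβdef]; linarith
  have hβ4 : (1:ℝ)/4 < β := by rw [hβdef]; linarith
  have hkey : β • x + w = m + u := by
    have h2 : ‖m‖ • x = m := by
      rw [hxdef, smul_smul, mul_inv_cancel₀ (ne_of_gt hm_pos), one_smul]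
    have hc : β - f = ‖m‖ := by rw [hβdef]; ring
    calc β • x + w = (β - f) • x + u := by rw [hwdef]; module
      _ = ‖m‖ • x + u := by rw [hc]
      _ = m + u := by rw [h2]
  have hA : ‖β • x + w‖ ≤ 1 := by rw [hkey]; exact hmu
  have h1β : 1 - β = d0 - f := by rw [hβdef, hd0def]; ring
  have hd0f : 0 ≤ d0 - f := by linarith
  clear_value β v w x f u0 d0 m ε s δ
  rcases le_or_gt (s * β) ‖w‖ with hcase | hcase
  · -- Case A : s ≤ ‖w‖/β
    have hθ1 : s * β / ‖w‖ ≤ 1 := by rw [div_le_one hwpos]; exact hcase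
    have hθ0 : 0 ≤ s * β / ‖w‖ :=
      div_nonneg (mul_nonneg hs (le_of_lt hβpos)) (le_of_lt hwpos)
    have hiden : x + s • v = (1 - s * β / ‖w‖) • x + (s / ‖w‖) • (β • x + w) := by
      rw [hvdef]
      module
    have hbound : ‖x + s • v‖ ≤ (1 - s * β / ‖w‖) + (s / ‖w‖) * 1 := by
      rw [hiden]
      have n1 : ‖(1 - s * β / ‖w‖) • x‖ = 1 - s * β / ‖w‖ := by
        rw [norm_smul, hxnorm, mul_one, Real.norm_eq_abs, abs_of_nonneg (by linarith)]
      have n2 : ‖(s / ‖w‖) • (β • x + w)‖ ≤ (s / ‖w‖) * 1 := by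
        rw [norm_smul, Real.norm_eq_abs,
          abs_of_nonneg (div_nonneg hs (le_of_lt hwpos))]
        exact mul_le_mul_of_nonneg_left hA (div_nonneg hs (le_of_lt hwpos))
      calc ‖(1 - s * β / ‖w‖) • x + (s / ‖w‖) • (β • x + w)‖
          ≤ ‖(1 - s * β / ‖w‖) • x‖ + ‖(s / ‖w‖) • (β • x + w)‖ := norm_add_le _ _
        _ ≤ (1 - s * β / ‖w‖) + (s / ‖w‖) * 1 := by rw [n1]; linarith [n2]
    have hval : ‖x + s • v‖ - 1 ≤ s * (d0 - f) / ‖w‖ := by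
      have hidv : (1 - s * β / ‖w‖) + (s / ‖w‖) * 1 - 1 = s * (1 - β) / ‖w‖ := by
        field_simp
        ring
      rw [← h1β]
      linarith
    have halg : s * (d0 - f) ≤ (δ + 2*ε) * (t/2 - f) := by
      have hseq : s = t/2 - 2*δ := hsdef
      rw [hseq]
      have p1 : (0:ℝ) ≤ (t/2 - 2*δ) * (δ + ε - d0) :=
        mul_nonneg (by linarith) (by linarith)
      have p2 : (0:ℝ) ≤ f * (t/2 - 2*δ) := mul_nonneg hf0 (by linarith)
      have p3 : (0:ℝ) ≤ δ * (δ + ε - f) := mul_nonneg hδ0 (by linarith)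
      have p4 : (0:ℝ) ≤ 2*ε * (δ + ε - f) := mul_nonneg (by linarith) (by linarith)
      have p5 : (0:ℝ) ≤ δ * δ := mul_nonneg hδ0 hδ0
      have p6 : (0:ℝ) ≤ ε * (t/2 - δ - 2*ε) := mul_nonneg (le_of_lt hε0) (by linarith)
      linarith [p1, p2, p3, p4, p5, p6]
    have hfin : s * (d0 - f) / ‖w‖ ≤ δ + 2*ε := by
      calc s * (d0 - f) / ‖w‖ ≤ s * (d0 - f) / (t/2 - f) :=
            div_le_div_of_nonneg_left (mul_nonneg hs hd0f) htf hwlb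
        _ ≤ δ + 2*ε := by rw [div_le_iff₀ htf]; linarith
    have h2ε : 2*ε ≤ η := by linarith
    linarith
  · -- Case B : ‖w‖/β < s
    have hΛs : ‖w‖/β ≤ s := by rw [div_le_iff₀ hβpos]; linarith
    have hiden2 : x + s • v = (x + (‖w‖/β) • v) + (s - ‖w‖/β) • v := by module
    have hQ : x + (‖w‖/β) • v = (1/β) • (β • x + w) := by
      rw [hvdef, smul_smul]
      have hc : ‖w‖/β * ‖w‖⁻¹ = 1/β := by
        field_simp
      rw [hc, smul_add, smul_smul, one_div, inv_mul_cancel₀ (ne_of_gt hβpos), one_smul]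
    have hbound : ‖x + s • v‖ ≤ (1/β) * 1 + (s - ‖w‖/β) := by
      rw [hiden2, hQ]
      calc ‖(1/β) • (β • x + w) + (s - ‖w‖/β) • v‖
          ≤ ‖(1/β) • (β • x + w)‖ + ‖(s - ‖w‖/β) • v‖ := norm_add_le _ _
        _ ≤ (1/β) * 1 + (s - ‖w‖/β) := by
            have n1 : ‖(1/β) • (β • x + w)‖ ≤ (1/β) * 1 := by
              rw [norm_smul, Real.norm_eq_abs, abs_of_nonneg (by positivity : (0:ℝ) ≤ 1/β)]
              exact mul_le_mul_of_nonneg_left hA (by positivity : (0:ℝ) ≤ 1/β)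
            have n2 : ‖(s - ‖w‖/β) • v‖ = s - ‖w‖/β := by
              rw [norm_smul, hvnorm, mul_one, Real.norm_eq_abs, abs_of_nonneg (by linarith)]
            rw [n2]
            linarith [n1]
    have hNle : 1 - β + s * β - ‖w‖ ≤ 2*ε := by
      have q1 : s * β ≤ s * (1 + f) := mul_le_mul_of_nonneg_left hβub hs
      have q2 : s * f ≤ 1 * f := mul_le_mul_of_nonneg_right (le_of_lt hs1) hf0
      have hsβ : s * β ≤ s + f := by linarith [q1, q2]
      linarith [hwlb, h1β, hsβ, hfd0, hd0lt, hft, hsdef]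
    have hexp : (1/β) * 1 + (s - ‖w‖/β) - 1 = (1 - β + s*β - ‖w‖)/β := by
      field_simp
      ring
    have hfin : (1 - β + s*β - ‖w‖)/β ≤ 8*ε := by
      rw [div_le_iff₀ hβpos]
      have p : (0:ℝ) ≤ ε * (4*β - 1) := mul_nonneg (le_of_lt hε0) (by linarith)
      linarith [hNle, p]
    have h8ε : 8*ε ≤ η := by linarith
    linarith
end PartD

section PartE
variable {X : Type u} [NormedAddCommGroup X] [NormedSpace ℝ X]

lemma part_e (hdim : 2 ≤ Module.rank ℝ X) :
    (∀ t : ℝ, 0 < t → 0 < tangentialModulus X t) ↔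
      ∀ ε : ℝ, 0 < ε → ε < 2 → 0 < convexityModulus X ε := by
  constructor
  · intro hφ ε hε0 hε2
    rcases lt_or_ge 0 (convexityModulus X ε) with h | h
    · exact h
    exfalso
    have hδeq : convexityModulus X ε = 0 :=
      le_antisymm h (cm_nonneg hdim (le_of_lt hε2))
    have hcond : 0 ≤ ε/2 - 2*convexityModulus X ε := by rw [hδeq]; linarith
    have hd := part_d hdim (le_of_lt hε0) hε2 hcond
    rw [hδeq] at hd
    have harg : ε/2 - 2*(0:ℝ) = ε/2 := by ring
    rw [harg] at hd
    have := hφ (ε/2) (by linarith)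
    linarith
  · intro hδ
    have hsmall : ∀ t : ℝ, 0 < t → t < 2 → 0 < tangentialModulus X t := by
      intro t ht h2
      rcases lt_or_ge 0 (tangentialModulus X t) with h | h
      · exact h
      exfalso
      have hφeq : tangentialModulus X t = 0 := le_antisymm h (tm_nonneg hdim t)
      have hc := part_c hdim (le_of_lt ht) h2
      rw [hφeq] at hc
      have h1 : t / (1 + (0:ℝ)) = t := by norm_num
      have h2' : (0:ℝ) / (1 + 0) = 0 := by norm_num
      rw [h1, h2'] at hc
      linarith [hδ t ht h2]
    intro t ht
    rcases lt_or_ge t 2 with h2 | h2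
    · exact hsmall t ht h2
    · exact lt_of_lt_of_le (hsmall 1 one_pos one_lt_two)
        (tm_mono hdim zero_le_one (by linarith))

end PartE


/-- Properties of the tangential modulus of convexity `φ_X` of a
normed space of dimension at least `2`: (a) `φ_X(0) = 0` and `φ_X` is `1`-Lipschitz on
`[0, ∞)`; (b) `φ_X(λ t) ≤ λ φ_X(t)` for `λ ∈ (0,1)`, `t ≥ 0`, and in particular `φ_X` is
non-decreasing; (c) `δ_X(t/(1 + φ_X(t))) ≤ φ_X(t)/(1 + φ_X(t))` for `t ∈ [0,2)`;
(d) if `t ∈ [0,2)` and `t/2 - 2 δ_X(t) ≥ 0` then `φ_X(t/2 - 2 δ_X(t)) ≤ δ_X(t)`;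
(e) `φ_X` is positive on `(0,∞)` iff `δ_X` is positive on `(0,2)`. -/
theorem tangentialModulus_properties {X : Type u} [NormedAddCommGroup X]
    [NormedSpace ℝ X] (hdim : 2 ≤ Module.rank ℝ X) :
    (tangentialModulus X 0 = 0 ∧
      ∀ s t : ℝ, 0 ≤ s → 0 ≤ t →
        |tangentialModulus X s - tangentialModulus X t| ≤ |s - t|) ∧
    (∀ lam t : ℝ, 0 < lam → lam < 1 → 0 ≤ t →
      tangentialModulus X (lam * t) ≤ lam * tangentialModulus X t) ∧
    (∀ s t : ℝ, 0 ≤ s → s ≤ t → tangentialModulus X s ≤ tangentialModulus X t) ∧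
    (∀ t : ℝ, 0 ≤ t → t < 2 →
      convexityModulus X (t / (1 + tangentialModulus X t)) ≤
        tangentialModulus X t / (1 + tangentialModulus X t)) ∧
    (∀ t : ℝ, 0 ≤ t → t < 2 → 0 ≤ t / 2 - 2 * convexityModulus X t →
      tangentialModulus X (t / 2 - 2 * convexityModulus X t) ≤ convexityModulus X t) ∧
    ((∀ t : ℝ, 0 < t → 0 < tangentialModulus X t) ↔
      ∀ ε : ℝ, 0 < ε → ε < 2 → 0 < convexityModulus X ε) := by
  exact ⟨⟨tm_zero hdim, fun s t _ _ => tm_lipschitz hdim s t⟩,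
    fun lam t h0 h1 _ => tm_scale hdim h0 (le_of_lt h1),
    fun s t hs hst => tm_mono hdim hs hst,
    fun t ht0 ht2 => part_c hdim ht0 ht2,
    fun t ht0 ht2 hcond => part_d hdim ht0 ht2 hcond,
    part_e hdim⟩
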